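/- Let D ≥ 1 be a natural number and x_1, …, x_D complex numbers such that x_i x_j ≠ 1 for all i, j. Then the D × D matrix C with entries C_{ij} = 1/(1 − x_i x_j) satisfies det C = (∏_{1 ≤ j < i ≤ D} (x_i − x_j)²) / (∏_{i=1}^D ∏_{j=1}^D (1 − x_i x_j)). -/

import Mathlib

open Finset

private lemma cauchy_det : ∀ (n : ℕ) (x : Fin n → ℂ), (∀ i j, x i * x j ≠ 1) →
    Matrix.det (Matrix.of fun i j : Fin n => 1 / (1 - x i * x j)) =
      (∏ i : Fin n, ∏ j ∈ Finset.univ.filter (fun j => j < i), (x i - x j) ^ 2) /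
        (∏ i : Fin n, ∏ j : Fin n, (1 - x i * x j)) := by
  intro n
  induction n with
  | zero => intro x hx; simp [Matrix.det_fin_zero]
  | succ n ih =>
    intro x hx
    have h1 : ∀ i j, (1 : ℂ) - x i * x j ≠ 0 := fun i j => sub_ne_zero.mpr (Ne.symm (hx i j))
    set y : Fin n → ℂ := x ∘ Fin.succ with hy
    have hyx : ∀ i j, y i * y j ≠ 1 := fun i j => hx _ _
    have hy1 : ∀ i j, (1 : ℂ) - y i * y j ≠ 0 := fun i j => h1 _ _
    -- the row-operation coefficients
    set d : Fin (n+1) → ℂ := fun i => if i = 0 then 0 else (1 - x 0 * x 0) / (1 - x i * x 0)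
      with hd
    set C : Matrix (Fin (n+1)) (Fin (n+1)) ℂ := Matrix.of fun i j => 1 / (1 - x i * x j)
      with hC
    set A : Matrix (Fin (n+1)) (Fin (n+1)) ℂ :=
      Matrix.of fun i j => d i * (if j = 0 then 1 else 0) with hA
    set E : Matrix (Fin (n+1)) (Fin (n+1)) ℂ := 1 - A with hE
    have hdetE : E.det = 1 := by
      have htri : E.BlockTriangular OrderDual.toDual := by
        intro i j hij
        have hji : i < j := hij
        have hj0 : j ≠ 0 := Fin.pos_iff_ne_zero.mp (lt_of_le_of_lt (Fin.zero_le i) hji)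
        simp [hE, hA, Matrix.one_apply, hji.ne, hj0]
      rw [Matrix.det_of_lowerTriangular E htri]
      have : ∀ i : Fin (n+1), E i i = 1 := by
        intro i
        by_cases hi : i = 0 <;> simp [hE, hA, hd, Matrix.one_apply, hi]
      simp [this]
    set M : Matrix (Fin (n+1)) (Fin (n+1)) ℂ := E * C with hM
    have hMentry : ∀ i j, M i j = C i j - d i * C 0 j := by
      intro i j
      simp only [hM, hE, Matrix.sub_mul, Matrix.one_mul, Matrix.sub_apply, Matrix.mul_apply,
        hA, Matrix.of_apply]
      congr 1
      rw [Finset.sum_eq_single 0]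
      · simp
      · intro b _ hb; simp [hb]
      · simp
    have hdetM : M.det = C.det := by rw [hM, Matrix.det_mul, hdetE, one_mul]
    -- column 0 of M below the top row is zero
    have hMcol0 : ∀ i : Fin n, M i.succ 0 = 0 := by
      intro i
      rw [hMentry]
      simp only [hC, Matrix.of_apply, hd, Fin.succ_ne_zero, if_false]
      rw [div_mul_div_comm, mul_one, mul_comm (1 - x i.succ * x 0), div_mul_eq_div_div,
        div_self (h1 0 0), sub_self]
    -- entries of the minor
    have hMminor : ∀ i j : Fin n, M i.succ j.succ =
        ((x i.succ - x 0) / (1 - x i.succ * x 0)) *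
          (((x j.succ - x 0) / (1 - x 0 * x j.succ)) * (1 / (1 - y i * y j))) := by
      intro i j
      rw [hMentry]
      simp only [hC, Matrix.of_apply, hd, Fin.succ_ne_zero, if_false, hy, Function.comp]
      have h00 := h1 0 0
      have hi0 := h1 i.succ 0
      have h0j := h1 0 j.succ
      have hij := h1 i.succ j.succ
      rw [eq_comm]
      field_simp
      ring
    -- expand along column 0
    have hexp : M.det = C 0 0 * (M.submatrix Fin.succ Fin.succ).det := by
      rw [Matrix.det_succ_column_zero]
      rw [Fin.sum_univ_succ]
      have : ∀ i : Fin n, (-1 : ℂ) ^ ((i.succ : Fin (n+1)) : ℕ) * M i.succ 0 *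
          (M.submatrix (Fin.succAbove i.succ) Fin.succ).det = 0 := by
        intro i; rw [hMcol0]; ring
      rw [Finset.sum_congr rfl (fun i _ => this i), Finset.sum_const_zero, add_zero]
      have hM00 : M 0 0 = C 0 0 := by
        rw [hMentry]; simp [hd]
      rw [hM00, Fin.succAbove_zero]
      simp
    have hsub : (M.submatrix Fin.succ Fin.succ).det =
        (∏ i : Fin n, (x i.succ - x 0) / (1 - x i.succ * x 0)) *
          ((∏ j : Fin n, (x j.succ - x 0) / (1 - x 0 * x j.succ)) *
            Matrix.det (Matrix.of fun i j : Fin n => 1 / (1 - y i * y j))) := by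
      have : M.submatrix Fin.succ Fin.succ = Matrix.of fun i j =>
          ((x i.succ - x 0) / (1 - x i.succ * x 0)) *
            ((Matrix.of fun i j : Fin n =>
              ((x j.succ - x 0) / (1 - x 0 * x j.succ)) * (1 / (1 - y i * y j))) i j) := by
        ext i j; exact hMminor i j
      rw [this, Matrix.det_mul_column]
      congr 1
      exact Matrix.det_mul_row (fun j : Fin n => (x j.succ - x 0) / (1 - x 0 * x j.succ))
        (Matrix.of fun i j : Fin n => 1 / (1 - y i * y j))
    -- now the algebra
    have hC00 : C 0 0 = 1 / (1 - x 0 * x 0) := rfl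
    rw [← hdetM, hexp, hsub, hC00, ih y hyx]
    -- split the products on the RHS
    have hNum : (∏ i : Fin (n+1), ∏ j ∈ Finset.univ.filter (fun j => j < i), (x i - x j) ^ 2)
        = (∏ i : Fin n, (x i.succ - x 0) ^ 2) *
          (∏ i : Fin n, ∏ j ∈ Finset.univ.filter (fun j => j < i), (y i - y j) ^ 2) := by
      rw [Fin.prod_univ_succ]
      have h0 : (Finset.univ.filter (fun j : Fin (n+1) => j < 0)) = ∅ := by
        ext j; simp [Fin.not_lt_zero]
      rw [h0, Finset.prod_empty, one_mul, ← Finset.prod_mul_distrib]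
      refine Finset.prod_congr rfl fun i _ => ?_
      rw [Finset.prod_filter, Finset.prod_filter, Fin.prod_univ_succ]
      have hz : (0 : Fin (n+1)) < i.succ := i.succ_pos
      simp only [hz, if_true]
      congr 1
      refine Finset.prod_congr rfl fun j _ => ?_
      simp [Fin.succ_lt_succ_iff, hy, Function.comp]
    have hDen : (∏ i : Fin (n+1), ∏ j : Fin (n+1), (1 - x i * x j))
        = ((1 - x 0 * x 0) * ∏ j : Fin n, (1 - x 0 * x j.succ)) *
          ((∏ i : Fin n, (1 - x i.succ * x 0)) *
            (∏ i : Fin n, ∏ j : Fin n, (1 - y i * y j))) := by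
      rw [Fin.prod_univ_succ, Fin.prod_univ_succ, ← Finset.prod_mul_distrib]
      congr 1
      refine Finset.prod_congr rfl fun i _ => ?_
      rw [Fin.prod_univ_succ]
      simp [hy, Function.comp]
    rw [hNum, hDen]
    rw [Finset.prod_div_distrib, Finset.prod_div_distrib]
    have hP1 : (∏ i : Fin n, (1 - x i.succ * x 0)) ≠ 0 :=
      Finset.prod_ne_zero_iff.mpr fun i _ => h1 _ _
    have hP2 : (∏ j : Fin n, (1 - x 0 * x j.succ)) ≠ 0 :=
      Finset.prod_ne_zero_iff.mpr fun j _ => h1 _ _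
    have hP3 : (∏ i : Fin n, ∏ j : Fin n, (1 - y i * y j)) ≠ 0 :=
      Finset.prod_ne_zero_iff.mpr fun i _ => Finset.prod_ne_zero_iff.mpr fun j _ => hy1 _ _
    have h00 := h1 0 0
    have hsq : ∀ (f : Fin n → ℂ), (∏ i : Fin n, f i ^ 2) = (∏ i : Fin n, f i) ^ 2 := by
      intro f; rw [Finset.prod_pow]
    rw [hsq]
    field_simp

/-- Cauchy-type determinant: for `x_1, …, x_D` with `x_i x_j ≠ 1`, the matrix
`C_{ij} = 1/(1 − x i x_j)` has determinant
`(∏_{j<i} (x_i − x_j)²) / (∏_{i,j} (1 − x_i x_j))`. -/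
theorem stmt7 (D : ℕ) (hD : 1 ≤ D) (x : Fin D → ℂ) (hx : ∀ i j, x i * x j ≠ 1) :
    Matrix.det (Matrix.of fun i j : Fin D => 1 / (1 - x i * x j)) =
      (∏ i : Fin D, ∏ j ∈ Finset.univ.filter (fun j => j < i), (x i - x j) ^ 2) /
        (∏ i : Fin D, ∏ j : Fin D, (1 - x i * x j)) :=
  cauchy_det D x hx
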